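/- Under the hypotheses of the local stability region (|a| < 1, |a+b| < 1, |x(0) - v| ≤ δ, |v| ≤ ((1-|a|)/(1-(a+b)))δ), the sequence x(k) = a^k x(0) + b v (1-a^k)/(1-a) converges as k → ∞ to the point (b/(1-a)) v, which satisfies |(b/(1-a)) v - v| ≤ δ. -/

import Mathlib

theorem stmt_2 (a b δ v x0 : ℝ) (x : ℕ → ℝ)
    (hδ : 0 < δ) (ha : |a| < 1) (hab : |a + b| < 1)
    (hx : ∀ k : ℕ, x k = a ^ k * x0 + b * v * (1 - a ^ k) / (1 - a))
    (hx0 : |x0 - v| ≤ δ) (hv : |v| ≤ (1 - |a|) / (1 - (a + b)) * δ) :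
    Filter.Tendsto x Filter.atTop (nhds (b / (1 - a) * v)) ∧
      |b / (1 - a) * v - v| ≤ δ := by
  have ha1 : a < 1 := lt_of_abs_lt ha
  have h1a : (0:ℝ) < 1 - a := by linarith
  have hane : (1:ℝ) - a ≠ 0 := ne_of_gt h1a
  constructor
  · have htend : Filter.Tendsto (fun k : ℕ => a ^ k) Filter.atTop (nhds 0) :=
      tendsto_pow_atTop_nhds_zero_of_abs_lt_one ha
    have : Filter.Tendsto (fun k : ℕ => a ^ k * x0 + b * v * (1 - a ^ k) / (1 - a))
        Filter.atTop (nhds (0 * x0 + b * v * (1 - 0) / (1 - a))) := by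
      exact ((htend.mul_const x0).add
        ((((tendsto_const_nhds.sub htend).const_mul (b * v)).div_const (1 - a))))
    have heq : (0 : ℝ) * x0 + b * v * (1 - 0) / (1 - a) = b / (1 - a) * v := by
      field_simp
      ring
    rw [heq] at this
    exact this.congr (fun k => (hx k).symm)
  · have hab1 : (0:ℝ) < 1 - (a + b) := by linarith [lt_of_abs_lt hab]
    have key : b / (1 - a) * v - v = -((1 - (a + b)) / (1 - a)) * v := by
      field_simp
      ring
    rw [key, abs_mul, abs_neg, abs_div, abs_of_pos hab1, abs_of_pos h1a]
    have hv' : |v| ≤ (1 - |a|) / (1 - (a + b)) * δ := hv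
    have h1 : (1 - (a + b)) / (1 - a) * |v| ≤ (1 - (a + b)) / (1 - a) * ((1 - |a|) / (1 - (a + b)) * δ) := by
      apply mul_le_mul_of_nonneg_left hv' (le_of_lt (div_pos hab1 h1a))
    calc (1 - (a + b)) / (1 - a) * |v| ≤ (1 - (a + b)) / (1 - a) * ((1 - |a|) / (1 - (a + b)) * δ) := h1
      _ = (1 - |a|) / (1 - a) * δ := by field_simp
      _ ≤ δ := by
          have : (1 - |a|) / (1 - a) ≤ 1 := by
            rw [div_le_one h1a]
            linarith [le_abs_self a]
          nlinarith
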